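/- Let S be a commutative semiring and p an ideal of S. Then the ideal p[X] of the polynomial semiring S[X] (polynomials all of whose coefficients lie in p) is a prime ideal of S[X] if and only if p is a subtractive prime ideal of S. -/

import Mathlib

/-- For an ideal `p` of a commutative semiring `S`, the ideal `p[X]` of the
polynomial semiring `S[X]` consisting of the polynomials all of whose
coefficients lie in `p`. -/
def coeffIdeal {S : Type*} [CommSemiring S] (p : Ideal S) : Ideal (Polynomial S) where
  carrier := {f | ∀ n, f.coeff n ∈ p}
  zero_mem' := fun n => by simp
  add_mem' := fun hf hg n => by
    rw [Polynomial.coeff_add]; exact p.add_mem (hf n) (hg n)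
  smul_mem' := fun g f hf n => by
    rw [smul_eq_mul, Polynomial.coeff_mul]
    exact Ideal.sum_mem p fun c _ => p.mul_mem_left _ (hf c.2)

theorem mem_coeffIdeal {S : Type*} [CommSemiring S] (p : Ideal S) (f : Polynomial S) :
    f ∈ coeffIdeal p ↔ ∀ n, f.coeff n ∈ p := Iff.rfl

theorem C_mem_coeffIdeal {S : Type*} [CommSemiring S] (p : Ideal S) {a : S} (ha : a ∈ p) :
    Polynomial.C a ∈ coeffIdeal p := by
  intro n
  rw [Polynomial.coeff_C]
  split <;> simp [ha, p.zero_mem]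

/-- `p[X]` is a prime ideal of `S[X]` if and only if `p` is a subtractive prime
ideal of `S`. -/
theorem coeffIdeal_isPrime_iff {S : Type*} [CommSemiring S] (p : Ideal S) :
    (coeffIdeal p).IsPrime ↔
      (p.IsPrime ∧ ∀ a b : S, a + b ∈ p → a ∈ p → b ∈ p) := by
  constructor
  · intro hP
    have hone : (1 : S) ∉ p := by
      intro h1
      apply hP.ne_top
      rw [Ideal.eq_top_iff_one]
      intro n
      rcases eq_or_ne n 0 with rfl | hn
      · simpa using h1
      · simp [Polynomial.coeff_one, hn]
    refine ⟨⟨fun h => hone ((Ideal.eq_top_iff_one p).mp h), ?_⟩, ?_⟩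
    · intro a b hab
      have : Polynomial.C a * Polynomial.C b ∈ coeffIdeal p := by
        rw [← Polynomial.C_mul]
        exact C_mem_coeffIdeal p hab
      rcases hP.mem_or_mem this with h | h
      · left; simpa using h 0
      · right; simpa using h 0
    · intro a b hab ha
      set f : Polynomial S := Polynomial.C b + Polynomial.C b * Polynomial.X with hf
      set g : Polynomial S := Polynomial.C a + Polynomial.C b * Polynomial.X +
        Polynomial.C a * Polynomial.X ^ 2 with hg
      have hfg : f * g ∈ coeffIdeal p := by
        have : f * g = Polynomial.C (b * a) + Polynomial.C (b * (a + b)) * Polynomial.X +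
            Polynomial.C (b * (a + b)) * Polynomial.X ^ 2 +
            Polynomial.C (b * a) * Polynomial.X ^ 3 := by
          rw [hf, hg]
          simp only [Polynomial.C_mul, Polynomial.C_add]
          ring
        rw [this]
        refine Ideal.add_mem _ (Ideal.add_mem _ (Ideal.add_mem _ ?_ ?_) ?_) ?_ <;>
          first
            | exact C_mem_coeffIdeal p (p.mul_mem_left b ha)
            | exact Ideal.mul_mem_right _ _ (C_mem_coeffIdeal p (p.mul_mem_left b ha))
            | exact Ideal.mul_mem_right _ _ (C_mem_coeffIdeal p (p.mul_mem_left b hab))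
      rcases hP.mem_or_mem hfg with h | h
      · have := h 0
        simpa [hf] using this
      · have := h 1
        simpa [hg] using this
  · rintro ⟨hp, hsub⟩
    constructor
    · intro h
      have : (1 : Polynomial S) ∈ coeffIdeal p := (Ideal.eq_top_iff_one _).mp h
      exact hp.ne_top (Ideal.eq_top_iff_one p |>.mpr (by simpa using this 0))
    · intro f g hfg
      classical
      by_contra hc
      push_neg at hc
      obtain ⟨hf, hg⟩ := hc
      have hf' : ∃ n, f.coeff n ∉ p := by
        by_contra h; push_neg at h; exact hf h
      have hg' : ∃ n, g.coeff n ∉ p := by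
        by_contra h; push_neg at h; exact hg h
      set m := Nat.find hf' with hm_def
      set k := Nat.find hg' with hk_def
      have hm : f.coeff m ∉ p := Nat.find_spec hf'
      have hk : g.coeff k ∉ p := Nat.find_spec hg'
      have hmin_f : ∀ i < m, f.coeff i ∈ p := by
        intro i hi
        by_contra h
        exact Nat.find_min hf' hi h
      have hmin_g : ∀ j < k, g.coeff j ∈ p := by
        intro j hj
        by_contra h
        exact Nat.find_min hg' hj h
      have key := hfg (m + k)
      rw [Polynomial.coeff_mul] at key
      have hmem : ((m, k) : ℕ × ℕ) ∈ Finset.HasAntidiagonal.antidiagonal (m + k) := by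
        simp
      rw [← Finset.add_sum_erase _ _ hmem] at key
      have hrest : ∑ x ∈ (Finset.HasAntidiagonal.antidiagonal (m + k)).erase (m, k),
          f.coeff x.1 * g.coeff x.2 ∈ p := by
        apply Ideal.sum_mem
        intro x hx
        obtain ⟨hne, hx⟩ := Finset.mem_erase.mp hx
        rw [Finset.HasAntidiagonal.mem_antidiagonal] at hx
        rcases lt_or_ge x.1 m with h | h
        · exact p.mul_mem_right _ (hmin_f _ h)
        · have hx2 : x.2 < k := by
            by_contra h2
            push_neg at h2
            have h1 : x.1 = m := by omega
            have h2' : x.2 = k := by omega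
            exact hne (Prod.ext h1 h2')
          exact p.mul_mem_left _ (hmin_g _ hx2)
      have hmk : f.coeff m * g.coeff k ∈ p := by
        apply hsub _ _ _ hrest
        rwa [add_comm]
      rcases hp.mem_or_mem hmk with h | h
      · exact hm h
      · exact hk h
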